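/- Let a : ℕ → ℝ be a sequence with a(1) = 0 and a(n) = 1 + (1/(n−1)) · Σ_{l=1}^{n−1} a(l) for all integers n ≥ 2. Then for all n ≥ 1, a(n) = Σ_{l=1}^{n−1} 1/l (the (n−1)-st harmonic number). -/

import Mathlib

open Finset

/-- The recurrence `a 1 = 0`, `a n = 1 + (1/(n−1)) ∑_{l=1}^{n−1} a l` for `n ≥ 2`,
has solution `a n = ∑_{l=1}^{n−1} 1/l`, the `(n−1)`-st harmonic number. -/
theorem dslr_recurrence_harmonic (a : ℕ → ℝ)
    (h1 : a 1 = 0)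
    (hrec : ∀ n, 2 ≤ n → a n = 1 + (1 / ((n : ℝ) - 1)) * ∑ l ∈ Icc 1 (n - 1), a l) :
    ∀ n, 1 ≤ n → a n = ∑ l ∈ Icc 1 (n - 1), (1 : ℝ) / l := by
  intro n hn
  induction n, hn using Nat.le_induction with
  | base => simp [h1]
  | succ n hn ih =>
    rcases eq_or_lt_of_le hn with h | h
    · -- n = 1, so a 2 = 1
      subst h
      have := hrec 2 (by norm_num)
      simp at this
      simp [this, h1]
    · -- n ≥ 2
      have hn2 : 2 ≤ n := h
      have hrn : a n = 1 + (1 / ((n : ℝ) - 1)) * ∑ l ∈ Icc 1 (n - 1), a l := hrec n hn2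
      have hrs : a (n + 1) = 1 + (1 / (n : ℝ)) * ∑ l ∈ Icc 1 n, a l := by
        have := hrec (n + 1) (by omega)
        simpa using this
      have hpos : (0:ℝ) < (n:ℝ) - 1 := by
        have : (2:ℝ) ≤ n := by exact_mod_cast hn2
        linarith
      have hne : ((n:ℝ) - 1) ≠ 0 := ne_of_gt hpos
      have hnpos : (0:ℝ) < (n:ℝ) := by linarith
      have hnne : ((n:ℝ)) ≠ 0 := ne_of_gt hnpos
      -- express partial sum from hrn
      have hsum : ∑ l ∈ Icc 1 (n - 1), a l = ((n:ℝ) - 1) * (a n - 1) := by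
        field_simp at hrn
        linarith
      have hsplit : ∑ l ∈ Icc 1 n, a l = (∑ l ∈ Icc 1 (n - 1), a l) + a n := by
        have h' : n = (n - 1) + 1 := by omega
        rw [h', Finset.sum_Icc_succ_top (by omega : 1 ≤ n - 1 + 1)]
        rw [← h']
      have key : a (n + 1) = a n + 1 / (n : ℝ) := by
        rw [hrs, hsplit, hsum]
        field_simp
        ring
      rw [key, ih]
      have h' : n + 1 - 1 = (n - 1) + 1 := by omega
      rw [h', Finset.sum_Icc_succ_top (by omega : 1 ≤ n - 1 + 1)]
      have h'' : ((n - 1 + 1 : ℕ) : ℝ) = (n : ℝ) := by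
        have : n - 1 + 1 = n := by omega
        rw [this]
      rw [h'']
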